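/- arXiv:1511.09382 — 3 statements merged into one kernel-verified Lean document; each statement's English description precedes it below -/
import Mathlib

section
/- Let Φ: ℝ^D → ℝ be differentiable with Φ ≥ 0, and suppose there exist a > 0 and b ∈ (0,1) such that (1/2)⟨∇Φ(q), q⟩ ≥ b·Φ(q) + ((c₁b)² + c₂b(1−b))/(2(1−b))·|q|² − a for all q, where c₁, c₂ > 0. Then for V(q,p) = |p|²/2 + Φ(q) + c₁⟨q,p⟩ + c₂|q|²/2 one has b·V(q,p) ≤ |p|²/2 + (1/2)⟨∇Φ(q), q⟩ + a for all (q,p) ∈ ℝ^{2D}. -/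
open Real

/-- Under the drift hypothesis on `⟨∇Φ(q), q⟩`, the Lyapunov function
`V(q,p) = |p|²/2 + Φ(q) + c₁⟨q,p⟩ + c₂|q|²/2` satisfies
`b V(q,p) ≤ |p|²/2 + ⟨∇Φ(q), q⟩/2 + a`. -/
theorem lyapunov_drift_bound (D : ℕ) (Φ : (Fin D → ℝ) → ℝ)
    (gradPhi : (Fin D → ℝ) → (Fin D → ℝ))
    (hΦ : Differentiable ℝ Φ)
    (hgrad : ∀ q v, fderiv ℝ Φ q v = ∑ i, gradPhi q i * v i)
    (hΦ0 : ∀ q, 0 ≤ Φ q)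
    (a b c₁ c₂ : ℝ) (ha : 0 < a) (hb0 : 0 < b) (hb1 : b < 1)
    (hc₁ : 0 < c₁) (hc₂ : 0 < c₂)
    (hdrift : ∀ q : Fin D → ℝ,
      (1 / 2) * ∑ i, gradPhi q i * q i
        ≥ b * Φ q + ((c₁ * b) ^ 2 + c₂ * b * (1 - b)) / (2 * (1 - b)) * (∑ i, (q i) ^ 2) - a) :
    ∀ q p : Fin D → ℝ,
      b * ((∑ i, (p i) ^ 2) / 2 + Φ q + c₁ * (∑ i, q i * p i) + c₂ * (∑ i, (q i) ^ 2) / 2)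
        ≤ (∑ i, (p i) ^ 2) / 2 + (1 / 2) * (∑ i, gradPhi q i * q i) + a := by
  intro q p
  have hb1' : 0 < 1 - b := by linarith
  have key : c₁ * b * (∑ i, q i * p i)
      ≤ (1 - b) / 2 * (∑ i, (p i) ^ 2) + (c₁ * b) ^ 2 / (2 * (1 - b)) * (∑ i, (q i) ^ 2) := by
    have : ∑ i, c₁ * b * (q i * p i)
        ≤ ∑ i, ((1 - b) / 2 * (p i) ^ 2 + (c₁ * b) ^ 2 / (2 * (1 - b)) * (q i) ^ 2) := by
      apply Finset.sum_le_sum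
      intro i _
      rw [div_mul_eq_mul_div, div_mul_eq_mul_div,
        div_add_div _ _ (two_ne_zero) (by positivity : (2 * (1 - b)) ≠ 0),
        le_div_iff₀ (by positivity)]
      nlinarith [sq_nonneg ((1 - b) * p i - c₁ * b * q i)]
    simpa [Finset.mul_sum, Finset.sum_add_distrib] using this
  have hd := hdrift q
  have hK : ((c₁ * b) ^ 2 + c₂ * b * (1 - b)) / (2 * (1 - b))
      = (c₁ * b) ^ 2 / (2 * (1 - b)) + c₂ * b / 2 := by
    field_simp
  rw [hK] at hd
  nlinarith [key, hd]
end

section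
/- Under the hypotheses of the previous two statements (Φ ≥ 0 differentiable, the drift inequality on ⟨∇Φ(q), q⟩ with constants a > 0, b ∈ (0,1), and c₁, c₂ defined from λ > 0, φ ∈ (0, π/2] as above), there exist γ > 0 and K > 0 such that LV(q,p) ≤ −γ·V(q,p) + K for all (q,p) ∈ ℝ^{2D}; one may take γ = 2c₁b and K = 2c₁a + (D/(2λ))·sin²(φ). -/
open MeasureTheory ProbabilityTheory Real

/-- Standard Gaussian measure on `ℝ^D`. -/
noncomputable def stdGaussian (D : ℕ) : Measure (Fin D → ℝ) :=
  Measure.pi fun _ => gaussianReal 0 1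

/-- The RHMC infinitesimal generator. -/
noncomputable def rhmcGen (D : ℕ) (lam φ : ℝ) (gradPhi : (Fin D → ℝ) → (Fin D → ℝ))
    (f : (Fin D → ℝ) × (Fin D → ℝ) → ℝ) (z : (Fin D → ℝ) × (Fin D → ℝ)) : ℝ :=
  lam⁻¹ * ((∫ ξ : Fin D → ℝ,
      f (z.1, fun i => Real.cos φ * z.2 i + Real.sin φ * ξ i) ∂stdGaussian D) - f z)
    + fderiv ℝ f z (z.2, fun i => -gradPhi z.1 i)

/-- The RHMC Lyapunov function. -/
noncomputable def lyapV (D : ℕ) (Φ : (Fin D → ℝ) → ℝ) (c₁ c₂ : ℝ)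
    (z : (Fin D → ℝ) × (Fin D → ℝ)) : ℝ :=
  (∑ i, (z.2 i) ^ 2) / 2 + Φ z.1 + c₁ * (∑ i, z.1 i * z.2 i) + c₂ * (∑ i, (z.1 i) ^ 2) / 2

section Aux

open Set
open scoped ENNReal NNReal

lemma RhmcAux.M2' : ∫ x : ℝ, x ^ 2 * rexp (-x ^ 2 / 2) = Real.sqrt (2 * π) := by
  have h := integral_comp_abs (f := fun x : ℝ => x ^ 2 * rexp (-x ^ 2 / 2))
  simp only [sq_abs] at h
  rw [h]
  have h2 : ∫ x in Ioi (0:ℝ), x ^ 2 * rexp (-x ^ 2 / 2)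
      = ∫ x in Ioi (0:ℝ), x ^ (2:ℝ) * rexp (-(1/2) * x ^ (2:ℝ)) := by
    refine setIntegral_congr_fun measurableSet_Ioi (fun x hx => ?_)
    rw [show x ^ (2:ℝ) = x ^ 2 from by
      rw [show (2:ℝ) = ((2:ℕ):ℝ) by norm_num, Real.rpow_natCast]]
    ring_nf
  rw [h2, integral_rpow_mul_exp_neg_mul_rpow (by norm_num) (by norm_num) (by norm_num)]
  have e0 : ((2:ℝ) + 1) / 2 = 1/2 + 1 := by norm_num
  rw [e0, Real.Gamma_add_one (by norm_num), Real.Gamma_one_half_eq]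
  rw [show (-((2:ℝ) + 1) / 2) = (-((3:ℝ)/2) : ℝ) by norm_num]
  rw [Real.rpow_neg (by norm_num), show ((1:ℝ)/2) = (2:ℝ)⁻¹ by norm_num,
    Real.inv_rpow (by norm_num), inv_inv]
  have e1 : (2:ℝ) ^ ((3:ℝ)/2) = 2 * Real.sqrt 2 := by
    rw [show (3:ℝ)/2 = 1 + 1/2 by norm_num, Real.rpow_add (by norm_num), Real.rpow_one,
      ← Real.sqrt_eq_rpow]
  rw [e1, Real.sqrt_mul (by norm_num)]
  ring

lemma RhmcAux.pdf01 : ∀ x : ℝ, gaussianPDFReal 0 1 x = (Real.sqrt (2*π))⁻¹ * rexp (-x^2/2) := by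
  intro x; simp [gaussianPDFReal]

lemma RhmcAux.intble_x : Integrable (fun x : ℝ => x * rexp (-x^2/2)) := by
  have := integrable_mul_exp_neg_mul_sq (b := (1:ℝ)/2) (by norm_num)
  convert this using 2 with x
  ring_nf

lemma RhmcAux.intble_x2 : Integrable (fun x : ℝ => x^2 * rexp (-x^2/2)) := by
  have := integrable_rpow_mul_exp_neg_mul_sq (b := (1:ℝ)/2) (by norm_num) (s := 2) (by norm_num)
  have e : ∀ x : ℝ, x ^ (2:ℝ) = x ^ 2 := fun x => by
    rw [show (2:ℝ) = ((2:ℕ):ℝ) by norm_num, Real.rpow_natCast]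
  simp only [e] at this
  convert this using 2 with x
  ring_nf

lemma RhmcAux.g_eq (g : ℝ → ℝ) :
    ∫ x, g x ∂gaussianReal 0 1 = ∫ x, gaussianPDFReal 0 1 x * g x := by
  rw [gaussianReal_of_var_ne_zero 0 one_ne_zero]
  unfold gaussianPDF
  have hm : Measurable fun x => (gaussianPDFReal 0 1 x).toNNReal :=
    (measurable_gaussianPDFReal 0 1).real_toNNReal
  rw [show (fun x => ENNReal.ofReal (gaussianPDFReal 0 1 x))
      = (fun x => ((fun x => (gaussianPDFReal 0 1 x).toNNReal) x : ℝ≥0∞)) from rfl]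
  rw [integral_withDensity_eq_integral_smul hm]
  congr 1 with x
  simp [NNReal.smul_def, Real.coe_toNNReal _ (gaussianPDFReal_nonneg 0 1 x)]

lemma RhmcAux.g_intble (g : ℝ → ℝ)
    (hg : Integrable (fun x => gaussianPDFReal 0 1 x * g x)) :
    Integrable g (gaussianReal 0 1) := by
  rw [gaussianReal_of_var_ne_zero 0 one_ne_zero]
  unfold gaussianPDF
  have hm : Measurable fun x => (gaussianPDFReal 0 1 x).toNNReal :=
    (measurable_gaussianPDFReal 0 1).real_toNNReal
  rw [show (fun x => ENNReal.ofReal (gaussianPDFReal 0 1 x))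
      = (fun x => ((fun x => (gaussianPDFReal 0 1 x).toNNReal) x : ℝ≥0∞)) from rfl]
  rw [integrable_withDensity_iff_integrable_smul hm]
  refine hg.congr (Filter.Eventually.of_forall fun x => ?_)
  simp [NNReal.smul_def, Real.coe_toNNReal _ (gaussianPDFReal_nonneg 0 1 x)]

lemma RhmcAux.g_int1 : Integrable (fun x : ℝ => x) (gaussianReal 0 1) := by
  refine RhmcAux.g_intble _ ?_
  simp only [RhmcAux.pdf01]
  exact (RhmcAux.intble_x.const_mul ((Real.sqrt (2*π))⁻¹)).congr
    (by filter_upwards with x; ring)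

lemma RhmcAux.g_int2 : Integrable (fun x : ℝ => x ^ 2) (gaussianReal 0 1) := by
  refine RhmcAux.g_intble _ ?_
  simp only [RhmcAux.pdf01]
  exact (RhmcAux.intble_x2.const_mul ((Real.sqrt (2*π))⁻¹)).congr
    (by filter_upwards with x; ring)

lemma RhmcAux.g_mom1 : ∫ x, x ∂gaussianReal 0 1 = 0 := by
  rw [RhmcAux.g_eq]
  have h : ∫ x : ℝ, gaussianPDFReal 0 1 x * x
      = - ∫ x : ℝ, gaussianPDFReal 0 1 x * x := by
    nth_rewrite 1 [← integral_neg_eq_self]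
    rw [← integral_neg]
    congr 1 with x
    simp only [RhmcAux.pdf01]
    ring_nf
  linarith [h]

lemma RhmcAux.g_mom2 : ∫ x, x ^ 2 ∂gaussianReal 0 1 = 1 := by
  rw [RhmcAux.g_eq]
  have h : ∫ x : ℝ, gaussianPDFReal 0 1 x * x ^ 2
      = (Real.sqrt (2*π))⁻¹ * ∫ x : ℝ, x ^ 2 * rexp (-x^2/2) := by
    rw [← integral_const_mul]
    congr 1 with x
    simp only [RhmcAux.pdf01]; ring
  rw [h, RhmcAux.M2', inv_mul_cancel₀]
  positivity

instance (D : ℕ) : IsProbabilityMeasure (stdGaussian D) := by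
  unfold _root_.stdGaussian; infer_instance

lemma RhmcAux.map_eval (D : ℕ) (i : Fin D) :
    (stdGaussian D).map (Function.eval i) = gaussianReal 0 1 := by
  ext s hs
  rw [Measure.map_apply (measurable_pi_apply i) hs]
  rw [show (fun f : Fin D → ℝ => f i) ⁻¹' s
      = Set.pi Set.univ (Function.update (fun _ => Set.univ) i s) from Set.eval_preimage]
  rw [_root_.stdGaussian, Measure.pi_pi]
  rw [Finset.prod_eq_single i]
  · simp
  · intro j _ hj; simp [Function.update_of_ne hj]
  · simp

lemma RhmcAux.pi_intble1 {D : ℕ} (i : Fin D) :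
    Integrable (fun ξ : Fin D → ℝ => ξ i) (stdGaussian D) := by
  have h := integrable_map_measure (μ := stdGaussian D) (f := Function.eval i)
    (g := fun x : ℝ => x) measurable_id.aestronglyMeasurable (measurable_pi_apply i).aemeasurable
  rw [RhmcAux.map_eval] at h
  exact h.mp RhmcAux.g_int1

lemma RhmcAux.pi_intble2 {D : ℕ} (i : Fin D) :
    Integrable (fun ξ : Fin D → ℝ => (ξ i) ^ 2) (stdGaussian D) := by
  have h := integrable_map_measure (μ := stdGaussian D) (f := Function.eval i)
    (g := fun x : ℝ => x ^ 2) (measurable_id.pow_const 2).aestronglyMeasurable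
    (measurable_pi_apply i).aemeasurable
  rw [RhmcAux.map_eval] at h
  exact h.mp RhmcAux.g_int2

lemma RhmcAux.pi_mom1 {D : ℕ} (i : Fin D) : ∫ ξ, ξ i ∂stdGaussian D = 0 := by
  have h := integral_map (μ := stdGaussian D) (φ := Function.eval i) (f := fun x : ℝ => x)
    (measurable_pi_apply i).aemeasurable
    (by rw [RhmcAux.map_eval]; exact measurable_id.aestronglyMeasurable)
  rw [RhmcAux.map_eval] at h
  rw [← RhmcAux.g_mom1, h]

lemma RhmcAux.pi_mom2 {D : ℕ} (i : Fin D) : ∫ ξ, (ξ i) ^ 2 ∂stdGaussian D = 1 := by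
  have h := integral_map (μ := stdGaussian D) (φ := Function.eval i) (f := fun x : ℝ => x ^ 2)
    (measurable_pi_apply i).aemeasurable
    (by rw [RhmcAux.map_eval]; exact (measurable_id.pow_const 2).aestronglyMeasurable)
  rw [RhmcAux.map_eval] at h
  rw [← RhmcAux.g_mom2, h]

lemma RhmcAux.aff_eq {D : ℕ} (i : Fin D) (α β c : ℝ) :
    (fun ξ : Fin D → ℝ => (α + β * ξ i)^2/2 + c * (α + β * ξ i))
    = fun ξ : Fin D → ℝ => (α^2/2 + c*α) + ((α*β + c*β) * ξ i + (β^2/2) * (ξ i)^2) := by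
  funext ξ; ring

lemma RhmcAux.aff_intble {D : ℕ} (i : Fin D) (α β c : ℝ) :
    Integrable (fun ξ : Fin D → ℝ => (α + β * ξ i)^2/2 + c * (α + β * ξ i)) (stdGaussian D) := by
  rw [RhmcAux.aff_eq]
  exact (integrable_const _).add
    (((RhmcAux.pi_intble1 i).const_mul _).add ((RhmcAux.pi_intble2 i).const_mul _))

lemma RhmcAux.aff_int {D : ℕ} (i : Fin D) (α β c : ℝ) :
    ∫ ξ, ((α + β * ξ i)^2/2 + c * (α + β * ξ i)) ∂stdGaussian D
      = α^2/2 + β^2/2 + c*α := by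
  have I1 : Integrable (fun ξ : Fin D → ℝ => (α*β + c*β) * ξ i) (stdGaussian D) :=
    (RhmcAux.pi_intble1 i).const_mul _
  have I2 : Integrable (fun ξ : Fin D → ℝ => (β^2/2) * (ξ i)^2) (stdGaussian D) :=
    (RhmcAux.pi_intble2 i).const_mul _
  have I12 : Integrable (fun ξ : Fin D → ℝ => (α*β + c*β) * ξ i + (β^2/2) * (ξ i)^2)
      (stdGaussian D) := I1.add I2
  rw [RhmcAux.aff_eq, integral_add (integrable_const _) I12, integral_add I1 I2,
    integral_const_mul, integral_const_mul, RhmcAux.pi_mom1, RhmcAux.pi_mom2]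
  simp
  ring

lemma RhmcAux.int_lyap (D : ℕ) (φ c₁ c₂ : ℝ) (Φ : (Fin D → ℝ) → ℝ) (q p : Fin D → ℝ) :
    ∫ ξ, lyapV D Φ c₁ c₂ (q, fun i => Real.cos φ * p i + Real.sin φ * ξ i) ∂stdGaussian D
      = ∑ i, ((Real.cos φ * p i)^2/2 + (Real.sin φ)^2/2 + (c₁ * q i) * (Real.cos φ * p i))
        + (Φ q + c₂ * (∑ i, (q i)^2) / 2) := by
  have e : (fun ξ : Fin D → ℝ =>
      lyapV D Φ c₁ c₂ (q, fun i => Real.cos φ * p i + Real.sin φ * ξ i))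
      = fun ξ : Fin D → ℝ =>
        (∑ i, ((Real.cos φ * p i + Real.sin φ * ξ i)^2/2
          + (c₁ * q i) * (Real.cos φ * p i + Real.sin φ * ξ i)))
        + (Φ q + c₂ * (∑ i, (q i)^2) / 2) := by
    funext ξ
    simp only [lyapV, Finset.sum_add_distrib, ← Finset.sum_div, Finset.mul_sum, mul_assoc]
    ring
  have Isum : Integrable (fun ξ : Fin D → ℝ =>
      ∑ i, ((Real.cos φ * p i + Real.sin φ * ξ i)^2/2
        + (c₁ * q i) * (Real.cos φ * p i + Real.sin φ * ξ i))) (stdGaussian D) :=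
    integrable_finset_sum _ (fun i _ => RhmcAux.aff_intble i _ _ _)
  rw [e, integral_add Isum (integrable_const _), integral_finset_sum]
  · congr 1
    · exact Finset.sum_congr rfl fun i _ => RhmcAux.aff_int i _ _ _
    · simp
  · exact fun i _ => RhmcAux.aff_intble i _ _ _

lemma RhmcAux.fderiv_lyap (D : ℕ) (Φ : (Fin D → ℝ) → ℝ) (hΦ : Differentiable ℝ Φ) (c₁ c₂ : ℝ)
    (z v : (Fin D → ℝ) × (Fin D → ℝ)) :
    fderiv ℝ (lyapV D Φ c₁ c₂) z v
      = ∑ i, z.2 i * v.2 i + fderiv ℝ Φ z.1 v.1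
        + c₁ * ∑ i, (v.1 i * z.2 i + z.1 i * v.2 i) + c₂ * (∑ i, z.1 i * v.1 i) := by
  classical
  have hV : lyapV D Φ c₁ c₂ = fun z : (Fin D → ℝ) × (Fin D → ℝ) =>
      ((2:ℝ)⁻¹) * (∑ i, (z.2 i)^2) + Φ z.1 + c₁ * (∑ i, z.1 i * z.2 i)
        + (c₂/2) * (∑ i, (z.1 i)^2) := by
    funext w; simp only [lyapV]; ring
  let P1 : Fin D → ((Fin D → ℝ) × (Fin D → ℝ) →L[ℝ] ℝ) := fun i =>
    (ContinuousLinearMap.proj i).comp (ContinuousLinearMap.fst ℝ (Fin D → ℝ) (Fin D → ℝ))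
  let P2 : Fin D → ((Fin D → ℝ) × (Fin D → ℝ) →L[ℝ] ℝ) := fun i =>
    (ContinuousLinearMap.proj i).comp (ContinuousLinearMap.snd ℝ (Fin D → ℝ) (Fin D → ℝ))
  have hz1 : ∀ i, HasFDerivAt (fun z : (Fin D → ℝ) × (Fin D → ℝ) => z.1 i) (P1 i) z :=
    fun i => (P1 i).hasFDerivAt
  have hz2 : ∀ i, HasFDerivAt (fun z : (Fin D → ℝ) × (Fin D → ℝ) => z.2 i) (P2 i) z :=
    fun i => (P2 i).hasFDerivAt
  have hsq2 : ∀ i, HasFDerivAt (fun z : (Fin D → ℝ) × (Fin D → ℝ) => (z.2 i)^2)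
      (z.2 i • P2 i + z.2 i • P2 i) z := fun i => by
    simpa [← pow_two] using (hz2 i).fun_mul (hz2 i)
  have hsq1 : ∀ i, HasFDerivAt (fun z : (Fin D → ℝ) × (Fin D → ℝ) => (z.1 i)^2)
      (z.1 i • P1 i + z.1 i • P1 i) z := fun i => by
    simpa [← pow_two] using (hz1 i).fun_mul (hz1 i)
  have hA : HasFDerivAt (fun z : (Fin D → ℝ) × (Fin D → ℝ) => ((2:ℝ)⁻¹) * ∑ i, (z.2 i)^2)
      ((2:ℝ)⁻¹ • ∑ i, (z.2 i • P2 i + z.2 i • P2 i)) z :=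
    (HasFDerivAt.fun_sum (fun i _ => hsq2 i)).const_mul _
  have hB : HasFDerivAt (fun z : (Fin D → ℝ) × (Fin D → ℝ) => Φ z.1)
      ((fderiv ℝ Φ z.1).comp (ContinuousLinearMap.fst ℝ (Fin D → ℝ) (Fin D → ℝ))) z :=
    (hΦ z.1).hasFDerivAt.comp z hasFDerivAt_fst
  have hC : HasFDerivAt (fun z : (Fin D → ℝ) × (Fin D → ℝ) => c₁ * ∑ i, z.1 i * z.2 i)
      (c₁ • ∑ i, (z.1 i • P2 i + z.2 i • P1 i)) z :=
    (HasFDerivAt.fun_sum (fun i _ => (hz1 i).fun_mul (hz2 i))).const_mul c₁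
  have hD : HasFDerivAt (fun z : (Fin D → ℝ) × (Fin D → ℝ) => (c₂/2) * ∑ i, (z.1 i)^2)
      ((c₂/2) • ∑ i, (z.1 i • P1 i + z.1 i • P1 i)) z :=
    (HasFDerivAt.fun_sum (fun i _ => hsq1 i)).const_mul _
  have htot := ((hA.fun_add hB).fun_add hC).fun_add hD
  rw [← hV] at htot
  rw [htot.fderiv]
  simp only [ContinuousLinearMap.add_apply, ContinuousLinearMap.coe_sum',
    ContinuousLinearMap.smul_apply, ContinuousLinearMap.coe_comp', Function.comp_apply,
    ContinuousLinearMap.proj_apply, ContinuousLinearMap.coe_fst', ContinuousLinearMap.coe_snd',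
    smul_eq_mul, Finset.sum_apply, P1, P2]
  simp only [Finset.sum_add_distrib, Finset.mul_sum]
  ring_nf
  simp [mul_comm, mul_left_comm, mul_assoc]
  exact Finset.mul_sum _ _ _

end Aux

set_option maxHeartbeats 1000000 in
/-- Foster–Lyapunov drift condition for RHMC: `L V ≤ −γ V + K` with
`γ = 2 c₁ b > 0` and `K = 2 c₁ a + (D/(2λ)) sin²φ > 0`. -/
theorem rhmc_foster_lyapunov (D : ℕ) (lam φ : ℝ) (hlam : 0 < lam)
    (hφ0 : 0 < φ) (hφ : φ ≤ π / 2)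
    (Φ : (Fin D → ℝ) → ℝ) (gradPhi : (Fin D → ℝ) → (Fin D → ℝ))
    (hΦ : Differentiable ℝ Φ)
    (hgrad : ∀ q v, fderiv ℝ Φ q v = ∑ i, gradPhi q i * v i)
    (hΦ0 : ∀ q, 0 ≤ Φ q)
    (c₁ c₂ : ℝ) (hc₁ : c₁ = (1 / (4 * lam)) * Real.sin φ ^ 2)
    (hc₂ : c₂ = lam⁻¹ * c₁ * (1 - Real.cos φ))
    (a b : ℝ) (ha : 0 < a) (hb0 : 0 < b) (hb1 : b < 1)
    (hdrift : ∀ q : Fin D → ℝ,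
      (1 / 2) * ∑ i, gradPhi q i * q i
        ≥ b * Φ q + ((c₁ * b) ^ 2 + c₂ * b * (1 - b)) / (2 * (1 - b)) * (∑ i, (q i) ^ 2) - a) :
    0 < 2 * c₁ * b ∧ 0 < 2 * c₁ * a + (D / (2 * lam)) * Real.sin φ ^ 2 ∧
    ∀ z : (Fin D → ℝ) × (Fin D → ℝ),
      rhmcGen D lam φ gradPhi (lyapV D Φ c₁ c₂) z
        ≤ -(2 * c₁ * b) * lyapV D Φ c₁ c₂ z
            + (2 * c₁ * a + (D / (2 * lam)) * Real.sin φ ^ 2) := by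
  have hsin : 0 < Real.sin φ :=
    Real.sin_pos_of_pos_of_lt_pi hφ0 (lt_of_le_of_lt hφ (by linarith [Real.pi_pos]))
  have hc₁pos : 0 < c₁ := by rw [hc₁]; positivity
  refine ⟨by positivity, by positivity, ?_⟩
  rintro ⟨q, p⟩
  have h1b : (0:ℝ) < 1 - b := by linarith
  -- sum conversions
  have t1 : ∑ i, ((Real.cos φ * p i)^2/2) = Real.cos φ^2/2 * ∑ i, (p i)^2 := by
    rw [Finset.mul_sum]; exact Finset.sum_congr rfl fun i _ => by ring
  have t2 : ∑ i, ((c₁ * q i)*(Real.cos φ * p i)) = (c₁ * Real.cos φ) * ∑ i, q i * p i := by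
    rw [Finset.mul_sum]; exact Finset.sum_congr rfl fun i _ => by ring
  have t3 : ∑ i, (p i * p i + q i * -gradPhi q i)
      = (∑ i, (p i)^2) - ∑ i, gradPhi q i * q i := by
    rw [← Finset.sum_sub_distrib]
    exact Finset.sum_congr rfl fun i _ => by ring
  have t4 : ∑ i, (p i * -gradPhi q i) = -∑ i, gradPhi q i * p i := by
    rw [← Finset.sum_neg_distrib]
    exact Finset.sum_congr rfl fun i _ => by ring
  -- generator value
  have hgen : rhmcGen D lam φ gradPhi (lyapV D Φ c₁ c₂) (q, p)
      = -c₁ * (∑ i, (p i)^2) - c₁ * (∑ i, gradPhi q i * q i)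
        + (D : ℝ) / (2 * lam) * Real.sin φ ^ 2 := by
    simp only [rhmcGen]
    rw [RhmcAux.int_lyap D φ c₁ c₂ Φ q p,
      RhmcAux.fderiv_lyap D Φ hΦ c₁ c₂ (q, p) (p, fun i => -gradPhi q i)]
    simp only [hgrad]
    rw [Finset.sum_add_distrib, Finset.sum_add_distrib, Finset.sum_const, Finset.card_univ,
      Fintype.card_fin, nsmul_eq_mul, t1, t2, t3, t4]
    simp only [lyapV]
    rw [hc₂, hc₁, Real.sin_sq]
    field_simp
    ring
  rw [hgen]
  simp only [lyapV]
  -- drift and sum-of-squares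
  have hd := hdrift q
  have hsos : (0:ℝ) ≤ ∑ i, ((1-b)*p i - c₁*b*q i)^2 :=
    Finset.sum_nonneg fun i _ => sq_nonneg _
  have hexp : ∑ i, ((1-b)*p i - c₁*b*q i)^2
      = (1-b)^2*(∑ i, (p i)^2) - 2*(1-b)*(c₁*b)*(∑ i, q i * p i)
        + (c₁*b)^2*(∑ i, (q i)^2) := by
    rw [Finset.mul_sum, Finset.mul_sum, Finset.mul_sum,
      ← Finset.sum_sub_distrib, ← Finset.sum_add_distrib]
    exact Finset.sum_congr rfl fun i _ => by ring
  rw [hexp] at hsos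
  have hμq : ((c₁*b)^2 + c₂*b*(1-b))/(2*(1-b)) * (2*(1-b)) * (∑ i, (q i)^2)
      = ((c₁*b)^2 + c₂*b*(1-b)) * (∑ i, (q i)^2) := by
    rw [div_mul_cancel₀ _ (by positivity : (2*(1-b) : ℝ) ≠ 0)]
  have hstep : 2*c₁*b*(∑ i, q i * p i)*(1-b)
      ≤ ((1-b)*(∑ i, (p i)^2)
        + 2*(((c₁*b)^2 + c₂*b*(1-b))/(2*(1-b)))*(∑ i, (q i)^2)
        - b*c₂*(∑ i, (q i)^2))*(1-b) := by linarith [hsos, hμq]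
  have hstep2 : 2*c₁*b*(∑ i, q i * p i)
      ≤ (1-b)*(∑ i, (p i)^2)
        + 2*(((c₁*b)^2 + c₂*b*(1-b))/(2*(1-b)))*(∑ i, (q i)^2)
        - b*c₂*(∑ i, (q i)^2) := le_of_mul_le_mul_right hstep h1b
  have key : b*(∑ i, (p i)^2) + 2*b*(Φ q) + 2*c₁*b*(∑ i, q i * p i)
      + b*c₂*(∑ i, (q i)^2) ≤ (∑ i, (p i)^2) + (∑ i, gradPhi q i * q i) + 2*a := by
    linarith [hd, hstep2]
  have key' := mul_le_mul_of_nonneg_left key hc₁pos.le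
  linarith [key']
end

section
/- If δt ~ Exp(1/λ) with λ > 0 and σ > 0, then E[2 − 2cos(δt/σ)]·σ² = 2λ²σ²/(σ² + λ²). Consequently, for a D-dimensional Gaussian target with variances σ₁², …, σ_D², the single-step equilibrium mean squared displacement of exact RHMC is MSD = Σ_{i=1}^D 2λ²σᵢ²/(σᵢ² + λ²). -/
open MeasureTheory ProbabilityTheory Real

section RhmcAux
open Filter Set
open scoped NNReal ENNReal

-- second moment of centered gaussian density building block
lemma integral_sq_exp {b : ℝ} (hb : 0 < b) :
    ∫ x : ℝ, x ^ 2 * rexp (-b * x ^ 2) = √(π / b) / (2 * b) := by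
  have hderiv : ∀ x : ℝ, HasDerivAt (fun x : ℝ => -(2 * b)⁻¹ * (x * rexp (-b * x ^ 2)))
      (x ^ 2 * rexp (-b * x ^ 2) - (2 * b)⁻¹ * rexp (-b * x ^ 2)) x := by
    intro x
    have h1 : HasDerivAt (fun x : ℝ => -b * x ^ 2) (-b * (2 * x)) x := by
      simpa using ((hasDerivAt_pow 2 x).const_mul (-b))
    have h2 : HasDerivAt (fun x : ℝ => rexp (-b * x ^ 2)) (rexp (-b * x ^ 2) * (-b * (2 * x))) x :=
      h1.exp
    have h3 := ((hasDerivAt_id' x).mul h2).const_mul (-(2 * b)⁻¹)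
    refine h3.congr_deriv ?_
    have hb' : b ≠ 0 := hb.ne'
    field_simp
    ring
  have hf' : Integrable (fun x : ℝ => x ^ 2 * rexp (-b * x ^ 2) - (2 * b)⁻¹ * rexp (-b * x ^ 2)) := by
    have i1 : Integrable (fun x : ℝ => x ^ 2 * rexp (-b * x ^ 2)) := by
      have := integrable_rpow_mul_exp_neg_mul_sq hb (s := 2) (by norm_num)
      refine this.congr ?_
      filter_upwards with x
      rw [Real.rpow_two]
    exact i1.sub ((integrable_exp_neg_mul_sq hb).const_mul _)
  have hf : Integrable (fun x : ℝ => -(2 * b)⁻¹ * (x * rexp (-b * x ^ 2))) :=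
    (integrable_mul_exp_neg_mul_sq hb).const_mul _
  have h0 := integral_eq_zero_of_hasDerivAt_of_integrable hderiv hf' hf
  have i1 : Integrable (fun x : ℝ => x ^ 2 * rexp (-b * x ^ 2)) := by
    have := integrable_rpow_mul_exp_neg_mul_sq hb (s := 2) (by norm_num)
    refine this.congr ?_
    filter_upwards with x
    rw [Real.rpow_two]
  rw [integral_sub i1 ((integrable_exp_neg_mul_sq hb).const_mul _), sub_eq_zero] at h0
  rw [h0, MeasureTheory.integral_const_mul, integral_gaussian]
  field_simp

lemma gpdf_eq (v : ℝ≥0) :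
    gaussianPDFReal 0 v = fun x => (√(2 * π * v))⁻¹ * rexp (-(2 * (v:ℝ))⁻¹ * x ^ 2) := by
  funext x
  rw [gaussianPDFReal]
  congr 1
  rw [show -(x - 0) ^ 2 / (2 * (v:ℝ)) = -(2 * (v:ℝ))⁻¹ * x ^ 2 by ring]

lemma gaussian_integral_eq (v : ℝ≥0) (hv : v ≠ 0) (g : ℝ → ℝ) :
    ∫ x, g x ∂(gaussianReal 0 v) = ∫ x, g x * gaussianPDFReal 0 v x := by
  rw [gaussianReal_of_var_ne_zero 0 hv]
  have hm : Measurable fun x => (gaussianPDFReal 0 v x).toNNReal :=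
    (measurable_gaussianPDFReal 0 v).real_toNNReal
  have hpdf : gaussianPDF 0 v = fun x => ((gaussianPDFReal 0 v x).toNNReal : ℝ≥0∞) := rfl
  rw [hpdf, integral_withDensity_eq_integral_smul hm g]
  congr 1
  funext x
  rw [NNReal.smul_def, smul_eq_mul, Real.coe_toNNReal _ (gaussianPDFReal_nonneg 0 v x), mul_comm]

lemma gaussian_integrable_iff (v : ℝ≥0) (hv : v ≠ 0) (g : ℝ → ℝ) :
    Integrable g (gaussianReal 0 v) ↔
      Integrable (fun x => g x * gaussianPDFReal 0 v x) := by
  rw [gaussianReal_of_var_ne_zero 0 hv]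
  have hm : Measurable fun x => (gaussianPDFReal 0 v x).toNNReal :=
    (measurable_gaussianPDFReal 0 v).real_toNNReal
  have hpdf : gaussianPDF 0 v = fun x => ((gaussianPDFReal 0 v x).toNNReal : ℝ≥0∞) := rfl
  rw [hpdf, integrable_withDensity_iff_integrable_smul hm]
  constructor <;> intro h <;> refine h.congr ?_ <;> filter_upwards with x <;>
    rw [NNReal.smul_def, smul_eq_mul, Real.coe_toNNReal _ (gaussianPDFReal_nonneg 0 v x), mul_comm]

lemma gaussian_moment_one (v : ℝ≥0) (hv : v ≠ 0) :
    ∫ x, x ∂(gaussianReal 0 v) = 0 := by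
  rw [gaussian_integral_eq v hv]
  have h := integral_neg_eq_self (fun x : ℝ => x * gaussianPDFReal 0 v x) (volume : Measure ℝ)
  have heven : ∀ x : ℝ, gaussianPDFReal 0 v (-x) = gaussianPDFReal 0 v x := by
    intro x; rw [gpdf_eq]; simp only []; ring_nf
  have h2 : ∫ x : ℝ, -x * gaussianPDFReal 0 v x = ∫ x : ℝ, x * gaussianPDFReal 0 v x := by
    calc ∫ x : ℝ, -x * gaussianPDFReal 0 v x
        = ∫ x : ℝ, -x * gaussianPDFReal 0 v (-x) := by
          congr 1; funext x; rw [heven]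
      _ = ∫ x : ℝ, x * gaussianPDFReal 0 v x := h
  have h3 : ∫ x : ℝ, -x * gaussianPDFReal 0 v x
      = -∫ x : ℝ, x * gaussianPDFReal 0 v x := by
    rw [← integral_neg]; congr 1; funext x; ring
  linarith [h2, h3]

lemma gaussian_moment_sq (v : ℝ≥0) (hv : v ≠ 0) :
    ∫ x, x ^ 2 ∂(gaussianReal 0 v) = v := by
  have hvpos : (0:ℝ) < v := lt_of_le_of_ne v.coe_nonneg (by exact_mod_cast hv.symm)
  have hb : (0:ℝ) < (2 * (v:ℝ))⁻¹ := by positivity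
  rw [gaussian_integral_eq v hv, gpdf_eq]
  have : ∫ x : ℝ, x ^ 2 * ((√(2 * π * v))⁻¹ * rexp (-(2 * (v:ℝ))⁻¹ * x ^ 2))
      = (√(2 * π * v))⁻¹ * ∫ x : ℝ, x ^ 2 * rexp (-(2 * (v:ℝ))⁻¹ * x ^ 2) := by
    rw [← MeasureTheory.integral_const_mul]; congr 1; funext x; ring
  rw [this, integral_sq_exp hb]
  have h1 : π / (2 * (v:ℝ))⁻¹ = 2 * π * v := by field_simp
  have h2 : (2 * ((2 * (v:ℝ))⁻¹)) = (v:ℝ)⁻¹ := by field_simp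
  rw [h1, h2]
  have h3 : √(2 * π * v) ≠ 0 := by positivity
  field_simp

lemma gaussian_integrable_id (v : ℝ≥0) (hv : v ≠ 0) :
    Integrable (fun x => x) (gaussianReal 0 v) := by
  have hb : (0:ℝ) < (2 * (v:ℝ))⁻¹ := by
    have hvpos : (0:ℝ) < v := lt_of_le_of_ne v.coe_nonneg (by exact_mod_cast hv.symm)
    positivity
  rw [gaussian_integrable_iff v hv, gpdf_eq]
  have := ((integrable_mul_exp_neg_mul_sq hb).const_mul (√(2 * π * v))⁻¹)
  refine this.congr ?_
  filter_upwards with x; ring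

lemma gaussian_integrable_sq (v : ℝ≥0) (hv : v ≠ 0) :
    Integrable (fun x => x ^ 2) (gaussianReal 0 v) := by
  have hb : (0:ℝ) < (2 * (v:ℝ))⁻¹ := by
    have hvpos : (0:ℝ) < v := lt_of_le_of_ne v.coe_nonneg (by exact_mod_cast hv.symm)
    positivity
  rw [gaussian_integrable_iff v hv, gpdf_eq]
  have i1 : Integrable (fun x : ℝ => x ^ 2 * rexp (-(2 * (v:ℝ))⁻¹ * x ^ 2)) := by
    have := integrable_rpow_mul_exp_neg_mul_sq hb (s := 2) (by norm_num)
    refine this.congr ?_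
    filter_upwards with x
    rw [Real.rpow_two]
  refine (i1.const_mul (√(2 * π * v))⁻¹).congr ?_
  filter_upwards with x; ring

lemma integrable_cos_exp {a b : ℝ} (ha : 0 < a) :
    IntegrableOn (fun t : ℝ => Real.cos (b * t) * rexp (-a * t)) (Ioi (0:ℝ)) := by
  refine (exp_neg_integrableOn_Ioi 0 ha).mono' ?_ ?_
  · exact Continuous.aestronglyMeasurable (by continuity)
  · filter_upwards with t
    rw [norm_mul, norm_eq_abs, norm_eq_abs, abs_exp]
    calc |Real.cos (b * t)| * rexp (-a * t) ≤ 1 * rexp (-a * t) := by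
          gcongr; exact abs_cos_le_one _
      _ = rexp (-a * t) := one_mul _

lemma integral_cos_exp {a b : ℝ} (ha : 0 < a) :
    ∫ t in Ioi (0:ℝ), Real.cos (b * t) * rexp (-a * t) = a / (a ^ 2 + b ^ 2) := by
  have hab : (0:ℝ) < a ^ 2 + b ^ 2 := by positivity
  set F : ℝ → ℝ := fun t => rexp (-a * t) * (b * Real.sin (b * t) - a * Real.cos (b * t)) *
    (a ^ 2 + b ^ 2)⁻¹ with hF
  have hderiv : ∀ t ∈ Ici (0:ℝ), HasDerivAt F (Real.cos (b * t) * rexp (-a * t)) t := by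
    intro t _
    have he : HasDerivAt (fun t : ℝ => rexp (-a * t)) (rexp (-a * t) * -a) t := by
      simpa using ((hasDerivAt_id t).const_mul (-a)).exp
    have hs : HasDerivAt (fun t : ℝ => Real.sin (b * t)) (Real.cos (b * t) * b) t := by
      simpa using ((hasDerivAt_id t).const_mul b).sin
    have hc : HasDerivAt (fun t : ℝ => Real.cos (b * t)) (-Real.sin (b * t) * b) t := by
      simpa using ((hasDerivAt_id t).const_mul b).cos
    have hg : HasDerivAt (fun t : ℝ => b * Real.sin (b * t) - a * Real.cos (b * t))
        (b * (Real.cos (b * t) * b) - a * (-Real.sin (b * t) * b)) t :=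
      (hs.const_mul b).sub (hc.const_mul a)
    have h := (he.mul hg).mul_const (a ^ 2 + b ^ 2)⁻¹
    refine h.congr_deriv ?_
    have hab' : a ^ 2 + b ^ 2 ≠ 0 := hab.ne'
    field_simp
    ring
  have htop : Tendsto F atTop (nhds 0) := by
    refine squeeze_zero_norm
      (a := fun t => rexp (-a * t) * ((|b| + |a|) * (a ^ 2 + b ^ 2)⁻¹)) ?_ ?_
    · intro t
      rw [hF]
      simp only [norm_mul, norm_eq_abs, abs_exp, abs_of_pos (inv_pos.2 hab)]
      rw [mul_assoc]
      gcongr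
      refine (abs_sub _ _).trans ?_
      rw [abs_mul, abs_mul]
      gcongr
      · calc |b| * |Real.sin (b * t)| ≤ |b| * 1 := by gcongr; exact abs_sin_le_one _
          _ = |b| := mul_one _
      · calc |a| * |Real.cos (b * t)| ≤ |a| * 1 := by gcongr; exact abs_cos_le_one _
          _ = |a| := mul_one _
    · rw [show (0:ℝ) = 0 * ((|b| + |a|) * (a ^ 2 + b ^ 2)⁻¹) by ring]
      refine Tendsto.mul_const _ ?_
      have harg : Tendsto (fun t : ℝ => -a * t) atTop atBot := by
        have h1 : Tendsto (fun t : ℝ => a * t) atTop atTop := tendsto_id.const_mul_atTop ha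
        have := tendsto_neg_atTop_atBot.comp h1
        refine this.congr fun t => ?_
        simp [Function.comp]
      exact Real.tendsto_exp_atBot.comp harg
  have hres := integral_Ioi_of_hasDerivAt_of_tendsto' hderiv (integrable_cos_exp ha) htop
  rw [hres, hF]
  simp only [mul_zero, Real.sin_zero, Real.cos_zero, Real.exp_zero]
  field_simp
  ring

lemma key1 {lam : ℝ} (hlam : 0 < lam) {s : ℝ} (hs : 0 < s) :
    ∫ t in Ioi (0:ℝ), (2 - 2 * Real.cos (t / s)) * (lam⁻¹ * rexp (-t / lam))
      = 2 * lam ^ 2 / (s ^ 2 + lam ^ 2) := by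
  have hl : (0:ℝ) < lam⁻¹ := inv_pos.2 hlam
  have heq : (fun t => (2 - 2 * Real.cos (t / s)) * (lam⁻¹ * rexp (-t / lam)))
      = fun t => (2 * lam⁻¹) * (Real.cos (0 * t) * rexp (-lam⁻¹ * t))
        - (2 * lam⁻¹) * (Real.cos (s⁻¹ * t) * rexp (-lam⁻¹ * t)) := by
    funext t
    rw [show -t / lam = -lam⁻¹ * t by ring, show t / s = s⁻¹ * t by ring, zero_mul, Real.cos_zero]
    ring
  rw [heq, integral_sub ((integrable_cos_exp hl).const_mul _) ((integrable_cos_exp hl).const_mul _),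
    MeasureTheory.integral_const_mul, MeasureTheory.integral_const_mul,
    integral_cos_exp hl (b := 0), integral_cos_exp hl (b := s⁻¹)]
  have hs' : s ≠ 0 := ne_of_gt hs
  have hl' : lam ≠ 0 := ne_of_gt hlam
  field_simp
  ring

lemma inner_int (c b : ℝ) (q : ℝ) :
    ∫ ξ : ℝ, (c * q + b * ξ - q) ^ 2 ∂gaussianReal 0 1 = ((c - 1) * q) ^ 2 + b ^ 2 := by
  have h1 : (1:ℝ≥0) ≠ 0 := one_ne_zero
  have heq : (fun ξ : ℝ => (c * q + b * ξ - q) ^ 2)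
      = fun ξ : ℝ => (((c - 1) * q) ^ 2 + (2 * (c - 1) * q * b) * ξ) + b ^ 2 * ξ ^ 2 := by
    funext ξ; ring
  have ia : Integrable (fun ξ : ℝ => ((c - 1) * q) ^ 2 + (2 * (c - 1) * q * b) * ξ)
      (gaussianReal 0 1) := by
    have := (integrable_const (μ := gaussianReal 0 1) (((c - 1) * q) ^ 2)).add
      ((gaussian_integrable_id 1 h1).const_mul (2 * (c - 1) * q * b))
    exact this
  have ib : Integrable (fun ξ : ℝ => b ^ 2 * ξ ^ 2) (gaussianReal 0 1) :=
    (gaussian_integrable_sq 1 h1).const_mul _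
  have ic : Integrable (fun ξ : ℝ => (2 * (c - 1) * q * b) * ξ) (gaussianReal 0 1) :=
    (gaussian_integrable_id 1 h1).const_mul _
  rw [heq, integral_add ia ib,
    integral_add (integrable_const _) ic,
    MeasureTheory.integral_const_mul, MeasureTheory.integral_const_mul,
    gaussian_moment_one 1 h1, gaussian_moment_sq 1 h1, integral_const]
  simp

lemma outer_int {s : ℝ} (hs : 0 < s) (c b : ℝ) :
    ∫ q : ℝ, (((c - 1) * q) ^ 2 + b ^ 2) ∂gaussianReal 0 (Real.toNNReal (s ^ 2))
      = (c - 1) ^ 2 * s ^ 2 + b ^ 2 := by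
  have hv : Real.toNNReal (s ^ 2) ≠ 0 := by
    rw [Ne, Real.toNNReal_eq_zero, not_le]
    positivity
  have heq : (fun q : ℝ => ((c - 1) * q) ^ 2 + b ^ 2)
      = fun q : ℝ => (c - 1) ^ 2 * q ^ 2 + b ^ 2 := by funext q; ring
  have ia : Integrable (fun q : ℝ => (c - 1) ^ 2 * q ^ 2)
      (gaussianReal 0 (Real.toNNReal (s ^ 2))) :=
    (gaussian_integrable_sq _ hv).const_mul _
  rw [heq, integral_add ia (integrable_const _),
    MeasureTheory.integral_const_mul, gaussian_moment_sq _ hv, integral_const]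
  simp [Real.coe_toNNReal _ (sq_nonneg s)]


end RhmcAux

section RhmcMain
open Filter Set
open scoped NNReal ENNReal

/-- `E[2 − 2cos(δt/σ)]·σ² = 2λ²σ²/(σ² + λ²)` for `δt ~ Exp(1/λ)`, and consequently the
single-step equilibrium mean squared displacement of exact RHMC for a `D`-dimensional Gaussian
target with variances `σᵢ²` is `MSD = Σᵢ 2λ²σᵢ²/(σᵢ² + λ²)`. At equilibrium `qᵢ ~ N(0, σᵢ²)`
and one step maps `qᵢ ↦ cos(δt/σᵢ) qᵢ + σᵢ sin(δt/σᵢ) ξᵢ` with `ξᵢ ~ N(0,1)`. -/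
theorem rhmc_msd (D : ℕ) (lam : ℝ) (hlam : 0 < lam) (σ : Fin D → ℝ) (hσ : ∀ i, 0 < σ i) :
    (∀ s : ℝ, 0 < s →
      (∫ t in Set.Ioi (0 : ℝ),
          (2 - 2 * Real.cos (t / s)) * (lam⁻¹ * Real.exp (-t / lam))) * s ^ 2
        = 2 * lam ^ 2 * s ^ 2 / (s ^ 2 + lam ^ 2)) ∧
    (∑ i,
        ∫ t in Set.Ioi (0 : ℝ),
          (∫ q : ℝ,
              (∫ ξ : ℝ,
                  (Real.cos (t / σ i) * q + σ i * Real.sin (t / σ i) * ξ - q) ^ 2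
                ∂gaussianReal 0 1)
            ∂gaussianReal 0 (Real.toNNReal (σ i ^ 2)))
            * (lam⁻¹ * Real.exp (-t / lam)))
      = ∑ i, 2 * lam ^ 2 * σ i ^ 2 / (σ i ^ 2 + lam ^ 2) := by
  have h1 : ∀ s : ℝ, 0 < s →
      (∫ t in Set.Ioi (0 : ℝ),
          (2 - 2 * Real.cos (t / s)) * (lam⁻¹ * Real.exp (-t / lam))) * s ^ 2
        = 2 * lam ^ 2 * s ^ 2 / (s ^ 2 + lam ^ 2) := by
    intro s hs
    rw [key1 hlam hs, div_mul_eq_mul_div]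
  refine ⟨h1, ?_⟩
  refine Finset.sum_congr rfl fun i _ => ?_
  have hs := hσ i
  have hpoint : ∀ t : ℝ,
      (∫ q : ℝ,
          (∫ ξ : ℝ,
              (Real.cos (t / σ i) * q + σ i * Real.sin (t / σ i) * ξ - q) ^ 2
            ∂gaussianReal 0 1)
        ∂gaussianReal 0 (Real.toNNReal (σ i ^ 2)))
      = (2 - 2 * Real.cos (t / σ i)) * σ i ^ 2 := by
    intro t
    have hin : ∀ q : ℝ,
        (∫ ξ : ℝ, (Real.cos (t / σ i) * q + σ i * Real.sin (t / σ i) * ξ - q) ^ 2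
          ∂gaussianReal 0 1)
        = ((Real.cos (t / σ i) - 1) * q) ^ 2 + (σ i * Real.sin (t / σ i)) ^ 2 := fun q =>
      inner_int (Real.cos (t / σ i)) (σ i * Real.sin (t / σ i)) q
    calc (∫ q : ℝ,
          (∫ ξ : ℝ, (Real.cos (t / σ i) * q + σ i * Real.sin (t / σ i) * ξ - q) ^ 2
            ∂gaussianReal 0 1)
          ∂gaussianReal 0 (Real.toNNReal (σ i ^ 2)))
        = ∫ q : ℝ, (((Real.cos (t / σ i) - 1) * q) ^ 2 + (σ i * Real.sin (t / σ i)) ^ 2)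
            ∂gaussianReal 0 (Real.toNNReal (σ i ^ 2)) := by
          congr 1; funext q; rw [hin q]
      _ = (Real.cos (t / σ i) - 1) ^ 2 * σ i ^ 2 + (σ i * Real.sin (t / σ i)) ^ 2 :=
          outer_int hs _ _
      _ = (2 - 2 * Real.cos (t / σ i)) * σ i ^ 2 := by
          linear_combination (σ i ^ 2) * (Real.sin_sq_add_cos_sq (t / σ i))
  calc (∫ t in Set.Ioi (0 : ℝ),
        (∫ q : ℝ,
            (∫ ξ : ℝ,
                (Real.cos (t / σ i) * q + σ i * Real.sin (t / σ i) * ξ - q) ^ 2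
              ∂gaussianReal 0 1)
          ∂gaussianReal 0 (Real.toNNReal (σ i ^ 2)))
          * (lam⁻¹ * Real.exp (-t / lam)))
      = ∫ t in Set.Ioi (0 : ℝ),
          ((2 - 2 * Real.cos (t / σ i)) * (lam⁻¹ * Real.exp (-t / lam))) * σ i ^ 2 := by
        congr 1; funext t; rw [hpoint t]; ring
    _ = (∫ t in Set.Ioi (0 : ℝ),
          (2 - 2 * Real.cos (t / σ i)) * (lam⁻¹ * Real.exp (-t / lam))) * σ i ^ 2 := by
        rw [integral_mul_const]
    _ = 2 * lam ^ 2 * σ i ^ 2 / (σ i ^ 2 + lam ^ 2) := h1 (σ i) hs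
end RhmcMain
end
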